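/- Let G = {1,2,3,4} with its natural linear order and let K be a formal context with object set G whose extents are exactly the intervals of this chain together with G and the empty set (i.e., Ext(K) = {A ⊆ G : A is of the form {i,…,j}} ∪ {G, ∅}). Then the interordinal scaling dimension of K is 1, while the ordinal scaling dimension of K is 2. In particular, the interordinal scaling dimension can be strictly smaller than the ordinal scaling dimension. -/

import Mathlib

/-- `E` is an extent of the formal context `(G, M, I)`. -/
def IsExtent {G M : Type*} (I : G → M → Prop) (E : Set G) : Prop :=
  ∃ B : Set M, E = {g | ∀ m ∈ B, I g m}

/-- `K = (G, M, I)` has ordinal scaling dimension at most `d`. -/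
def HasOSDAtMost {G M : Type*} (I : G → M → Prop) (d : ℕ) : Prop :=
  ∃ C : Fin d → Set (Set G), (∀ i, IsChain (· ⊆ ·) (C i)) ∧
    {E | IsExtent I E} = {E | ∃ F ⊆ ⋃ i, C i, E = ⋂₀ F}

/-- The ordinal scaling dimension: the least `d` such that `HasOSDAtMost I d`. -/
noncomputable def osd {G M : Type*} (I : G → M → Prop) : ℕ :=
  sInf {d | HasOSDAtMost I d}

/-- An extent ladder of `K = (G, M, I)`: a set of nonempty extents containing no three
pairwise `⊆`-incomparable members and closed under complementation in `G`. -/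
def IsExtentLadder {G M : Type*} (I : G → M → Prop) (R : Set (Set G)) : Prop :=
  (∀ A ∈ R, IsExtent I A ∧ A.Nonempty) ∧
  (¬ ∃ A ∈ R, ∃ B ∈ R, ∃ C ∈ R,
    (¬ A ⊆ B ∧ ¬ B ⊆ A) ∧ (¬ A ⊆ C ∧ ¬ C ⊆ A) ∧ (¬ B ⊆ C ∧ ¬ C ⊆ B)) ∧
  (∀ A ∈ R, Aᶜ ∈ R)

/-- `K` has interordinal scaling dimension at most `d`. -/
def HasISDAtMost {G M : Type*} (I : G → M → Prop) (d : ℕ) : Prop :=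
  ∃ R : Fin d → Set (Set G), (∀ i, IsExtentLadder I (R i)) ∧
    {E | IsExtent I E} = {E | ∃ F ⊆ ⋃ i, R i, E = ⋂₀ F}

/-- The interordinal scaling dimension: the least `d` such that `HasISDAtMost I d`. -/
noncomputable def isd {G M : Type*} (I : G → M → Prop) : ℕ :=
  sInf {d | HasISDAtMost I d}

namespace IsdOsdAux

def Ext4 : Set (Set (Fin 4)) :=
  {A : Set (Fin 4) | ∃ i j : Fin 4, A = Set.Icc i j} ∪ {Set.univ, ∅}

def D4 : Set (Set (Fin 4)) := {Set.Icc 0 0, Set.Icc 0 1, Set.Icc 0 2}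
def U4 : Set (Set (Fin 4)) := {Set.Icc 1 3, Set.Icc 2 3, Set.Icc 3 3}
def R4 : Set (Set (Fin 4)) := D4 ∪ U4

lemma chain3 {α : Type*} {a b c : Set α} (h1 : a ⊆ b) (h2 : b ⊆ c) :
    IsChain (· ⊆ ·) {a, b, c} := by
  have h3 : a ⊆ c := h1.trans h2
  intro x hx y hy _
  simp only [Set.mem_insert_iff, Set.mem_singleton_iff] at hx hy
  rcases hx with rfl | rfl | rfl <;> rcases hy with rfl | rfl | rfl <;> tauto

lemma chainD4 : IsChain (· ⊆ ·) D4 :=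
  chain3 (Set.Icc_subset_Icc (le_refl _) (by decide))
    (Set.Icc_subset_Icc (le_refl _) (by decide))

lemma chainU4 : IsChain (· ⊆ ·) U4 := by
  have := chain3 (a := Set.Icc (3:Fin 4) 3) (b := Set.Icc 2 3) (c := Set.Icc 1 3)
    (Set.Icc_subset_Icc (by decide) (le_refl _))
    (Set.Icc_subset_Icc (by decide) (le_refl _))
  have hset : ({Set.Icc (3:Fin 4) 3, Set.Icc 2 3, Set.Icc 1 3} : Set (Set (Fin 4))) = U4 := by
    unfold U4; ext x; simp; tauto
  rwa [hset] at this

lemma no3 {α : Type*} {D U : Set (Set α)} (hD : IsChain (· ⊆ ·) D)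
    (hU : IsChain (· ⊆ ·) U) :
    ¬ ∃ A ∈ D ∪ U, ∃ B ∈ D ∪ U, ∃ C ∈ D ∪ U,
      (¬ A ⊆ B ∧ ¬ B ⊆ A) ∧ (¬ A ⊆ C ∧ ¬ C ⊆ A) ∧ (¬ B ⊆ C ∧ ¬ C ⊆ B) := by
  rintro ⟨A, hA, B, hB, C, hC, ⟨hAB, hBA⟩, ⟨hAC, hCA⟩, ⟨hBC, hCB⟩⟩
  have key : ∀ {T : Set (Set α)}, IsChain (· ⊆ ·) T → ∀ {X}, X ∈ T → ∀ {Y}, Y ∈ T →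
      ¬ X ⊆ Y → ¬ Y ⊆ X → False := by
    intro T hT X hX Y hY h1 h2
    rcases eq_or_ne X Y with rfl | hne
    · exact h1 (le_refl _)
    · rcases hT hX hY hne with h | h
      · exact h1 h
      · exact h2 h
  rcases hA with hA | hA <;> rcases hB with hB | hB <;> rcases hC with hC | hC
  · exact key hD hA hB hAB hBA
  · exact key hD hA hB hAB hBA
  · exact key hD hA hC hAC hCA
  · exact key hU hB hC hBC hCB
  · exact key hD hB hC hBC hCB
  · exact key hU hA hC hAC hCA
  · exact key hU hA hB hAB hBA
  · exact key hU hA hB hAB hBA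

lemma chain_sInter_mem {α : Type*} {F : Set (Set α)} (hfin : F.Finite)
    (hc : IsChain (· ⊆ ·) F) (hne : F.Nonempty) : ⋂₀ F ∈ F := by
  refine Set.Finite.induction_on
    (motive := fun (s : Set (Set α)) _ => IsChain (· ⊆ ·) s → s.Nonempty → ⋂₀ s ∈ s)
    F hfin (fun _ h => absurd h (by simp)) ?_ hc hne
  intro a s _ _ ih hc' _
  rcases s.eq_empty_or_nonempty with rfl | hsne
  · simp
  · have hcs : IsChain (· ⊆ ·) s := hc'.mono (Set.subset_insert _ _)
    have hb := ih hcs hsne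
    rw [Set.sInter_insert]
    rcases hc'.total (Set.mem_insert a s) (Set.mem_insert_of_mem a hb) with h | h
    · rw [Set.inter_eq_left.mpr h]; exact Set.mem_insert a s
    · rw [Set.inter_eq_right.mpr h]; exact Set.mem_insert_of_mem a hb

lemma sInter_mem_of_closed {α : Type*} [Finite α] {S : Set (Set α)}
    (huniv : Set.univ ∈ S) (hint : ∀ A ∈ S, ∀ B ∈ S, A ∩ B ∈ S)
    {F : Set (Set α)} (hFS : F ⊆ S) : ⋂₀ F ∈ S := by
  refine Set.Finite.induction_on
    (motive := fun (s : Set (Set α)) _ => s ⊆ S → ⋂₀ s ∈ S)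
    F (Set.toFinite F) (fun _ => by simpa using huniv) ?_ hFS
  intro a s _ _ ih has
  rw [Set.sInter_insert]
  exact hint a (has (Set.mem_insert a s)) _ (ih fun x hx => has (Set.mem_insert_of_mem a hx))

lemma Ext4_inter_closed : ∀ A ∈ Ext4, ∀ B ∈ Ext4, A ∩ B ∈ Ext4 := by
  rintro A hA B hB
  rcases hA with ⟨i, j, rfl⟩ | hA
  · rcases hB with ⟨k, l, rfl⟩ | hB
    · exact Or.inl ⟨i ⊔ k, j ⊓ l, Set.Icc_inter_Icc⟩
    · rcases hB with rfl | rfl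
      · rw [Set.inter_univ]; exact Or.inl ⟨i, j, rfl⟩
      · rw [Set.inter_empty]; exact Or.inr (Or.inr rfl)
  · rcases hA with rfl | rfl
    · rw [Set.univ_inter]; exact hB
    · rw [Set.empty_inter]; exact Or.inr (Or.inr rfl)

lemma R4_subset_Ext4 : R4 ⊆ Ext4 := by
  rintro A (hA | hA) <;> rcases hA with rfl | rfl | rfl
  · exact Or.inl ⟨0, 0, rfl⟩
  · exact Or.inl ⟨0, 1, rfl⟩
  · exact Or.inl ⟨0, 2, rfl⟩
  · exact Or.inl ⟨1, 3, rfl⟩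
  · exact Or.inl ⟨2, 3, rfl⟩
  · exact Or.inl ⟨3, 3, rfl⟩

lemma R4_nonempty : ∀ A ∈ R4, A.Nonempty := by
  rintro A (hA | hA) <;> rcases hA with rfl | rfl | rfl
  · exact ⟨0, by simp⟩
  · exact ⟨0, by simp⟩
  · exact ⟨0, by simp⟩
  · exact ⟨3, by simp [Set.mem_Icc]⟩
  · exact ⟨3, by simp [Set.mem_Icc]⟩
  · exact ⟨3, by simp⟩

lemma R4_compl : ∀ A ∈ R4, Aᶜ ∈ R4 := by
  have h1 : (Set.Icc (0:Fin 4) 0)ᶜ = Set.Icc 1 3 := by ext x; simp [Set.mem_Icc]; omega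
  have h2 : (Set.Icc (0:Fin 4) 1)ᶜ = Set.Icc 2 3 := by ext x; simp [Set.mem_Icc]; omega
  have h3 : (Set.Icc (0:Fin 4) 2)ᶜ = Set.Icc 3 3 := by ext x; simp [Set.mem_Icc]; omega
  have h4 : (Set.Icc (1:Fin 4) 3)ᶜ = Set.Icc 0 0 := by ext x; simp [Set.mem_Icc]; omega
  have h5 : (Set.Icc (2:Fin 4) 3)ᶜ = Set.Icc 0 1 := by ext x; simp [Set.mem_Icc]; omega
  have h6 : (Set.Icc (3:Fin 4) 3)ᶜ = Set.Icc 0 2 := by ext x; simp [Set.mem_Icc]; omega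
  rintro A (hA | hA) <;> rcases hA with rfl | rfl | rfl
  · rw [h1]; exact Or.inr (Or.inl rfl)
  · rw [h2]; exact Or.inr (Or.inr (Or.inl rfl))
  · rw [h3]; exact Or.inr (Or.inr (Or.inr rfl))
  · rw [h4]; exact Or.inl (Or.inl rfl)
  · rw [h5]; exact Or.inl (Or.inr (Or.inl rfl))
  · rw [h6]; exact Or.inl (Or.inr (Or.inr rfl))

lemma memD4 : ∀ j : Fin 4, j ≠ 3 → Set.Icc (0:Fin 4) j ∈ D4 := by
  intro j hj
  fin_cases j
  · exact Or.inl rfl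
  · exact Or.inr (Or.inl rfl)
  · exact Or.inr (Or.inr rfl)
  · exact absurd rfl hj

lemma memU4 : ∀ i : Fin 4, i ≠ 0 → Set.Icc i (3:Fin 4) ∈ U4 := by
  intro i hi
  fin_cases i
  · exact absurd rfl hi
  · exact Or.inl rfl
  · exact Or.inr (Or.inl rfl)
  · exact Or.inr (Or.inr rfl)

lemma Icc03 : Set.Icc (0:Fin 4) 3 = Set.univ := by
  ext x; simp [Set.mem_Icc]; omega

lemma Ext4_eq : Ext4 = {E | ∃ F ⊆ R4, E = ⋂₀ F} := by
  ext E
  constructor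
  · rintro (⟨i, j, rfl⟩ | hE)
    · by_cases hi : i = 0 <;> by_cases hj : j = 3
      · subst hi; subst hj
        exact ⟨∅, Set.empty_subset _, by rw [Set.sInter_empty, Icc03]⟩
      · subst hi
        exact ⟨{Set.Icc 0 j}, Set.singleton_subset_iff.mpr (Or.inl (memD4 j hj)),
          by rw [Set.sInter_singleton]⟩
      · subst hj
        exact ⟨{Set.Icc i 3}, Set.singleton_subset_iff.mpr (Or.inr (memU4 i hi)),
          by rw [Set.sInter_singleton]⟩
      · refine ⟨{Set.Icc 0 j, Set.Icc i 3}, ?_, ?_⟩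
        · rintro X (rfl | rfl)
          · exact Or.inl (memD4 j hj)
          · exact Or.inr (memU4 i hi)
        · rw [Set.sInter_pair, Set.Icc_inter_Icc,
            sup_eq_right.mpr (Fin.zero_le i), inf_eq_left.mpr (by omega : j ≤ 3)]
    · rcases hE with rfl | rfl
      · exact ⟨∅, Set.empty_subset _, by rw [Set.sInter_empty]⟩
      · refine ⟨{Set.Icc 0 0, Set.Icc 3 3}, ?_, ?_⟩
        · rintro X (rfl | rfl)
          · exact Or.inl (Or.inl rfl)
          · exact Or.inr (Or.inr (Or.inr rfl))
        · rw [Set.sInter_pair]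
          ext x; simp [Set.mem_Icc]
  · rintro ⟨F, hF, rfl⟩
    exact sInter_mem_of_closed (Or.inr (Or.inl rfl)) Ext4_inter_closed
      (hF.trans R4_subset_Ext4)

end IsdOsdAux

open IsdOsdAux

/-- If `K` is a formal context on the four-element chain `Fin 4` whose
extents are exactly the intervals `{i, …, j}` together with the whole set and `∅`, then
the interordinal scaling dimension of `K` is `1` while its ordinal scaling dimension is
`2`.  In particular the interordinal scaling dimension can be strictly smaller than the
ordinal scaling dimension. -/
theorem isd_lt_osd_on_four_chain {M : Type*} (I : Fin 4 → M → Prop)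
    (hext : {E | IsExtent I E} =
      {A : Set (Fin 4) | ∃ i j : Fin 4, A = Set.Icc i j} ∪ {Set.univ, ∅}) :
    isd I = 1 ∧ osd I = 2 := by
  have hExtSet : {E | IsExtent I E} = Ext4 := hext
  have hladder : IsExtentLadder I R4 :=
    ⟨fun A hA => ⟨(Set.ext_iff.mp hExtSet A).mpr (R4_subset_Ext4 hA), R4_nonempty A hA⟩,
      no3 chainD4 chainU4, R4_compl⟩
  have h_isd1 : HasISDAtMost I 1 := by
    refine ⟨fun _ => R4, fun _ => hladder, ?_⟩
    rw [hExtSet, Ext4_eq]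
    simp only [Set.iUnion_const]
  have h_osd2 : HasOSDAtMost I 2 := by
    refine ⟨![D4, U4], ?_, ?_⟩
    · intro i
      fin_cases i
      · exact chainD4
      · exact chainU4
    · rw [hExtSet, Ext4_eq]
      have hU : (⋃ i, ![D4, U4] i) = R4 := by
        ext x
        simp [Set.mem_iUnion, Fin.exists_fin_two, R4, Set.mem_union]
      rw [hU]
  have h_isd0 : ¬ HasISDAtMost I 0 := by
    rintro ⟨R, -, heq⟩
    have h₀ : (∅ : Set (Fin 4)) ∈ {E | IsExtent I E} := by
      rw [hExtSet]; exact Or.inr (Or.inr rfl)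
    rw [heq] at h₀
    obtain ⟨F, hF, hFe⟩ := h₀
    rw [Set.iUnion_of_empty R] at hF
    rw [Set.subset_empty_iff.mp hF, Set.sInter_empty] at hFe
    exact Set.empty_ne_univ hFe
  have h_osd0 : ¬ HasOSDAtMost I 0 := by
    rintro ⟨R, -, heq⟩
    have h₀ : (∅ : Set (Fin 4)) ∈ {E | IsExtent I E} := by
      rw [hExtSet]; exact Or.inr (Or.inr rfl)
    rw [heq] at h₀
    obtain ⟨F, hF, hFe⟩ := h₀
    rw [Set.iUnion_of_empty R] at hF
    rw [Set.subset_empty_iff.mp hF, Set.sInter_empty] at hFe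
    exact Set.empty_ne_univ hFe
  have h_osd1 : ¬ HasOSDAtMost I 1 := by
    rintro ⟨C, hchain, heq⟩
    have hsub : (⋃ i, C i) ⊆ C 0 := Set.iUnion_subset fun i => by rw [Subsingleton.elim i 0]
    have key : ∀ a : Fin 4, ({a} : Set (Fin 4)) ∈ {E | IsExtent I E} → ({a} : Set (Fin 4)) ∈ C 0 := by
      intro a ha
      rw [heq] at ha
      obtain ⟨F, hF, hFe⟩ := ha
      have hFC : F ⊆ C 0 := hF.trans hsub
      have hne : F.Nonempty := by
        rcases F.eq_empty_or_nonempty with rfl | h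
        · rw [Set.sInter_empty] at hFe
          have h0 := Set.eq_univ_iff_forall.mp hFe 0
          have h1 := Set.eq_univ_iff_forall.mp hFe 1
          rw [Set.mem_singleton_iff] at h0 h1
          exact absurd (h0.trans h1.symm) (by decide)
        · exact h
      have hmem : ⋂₀ F ∈ F := chain_sInter_mem (Set.toFinite F) ((hchain 0).mono hFC) hne
      rw [← hFe] at hmem
      exact hFC hmem
    have h0m : ({0} : Set (Fin 4)) ∈ C 0 := by
      refine key 0 ?_
      rw [hExtSet]; exact Or.inl ⟨0, 0, (Set.Icc_self 0).symm⟩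
    have h3m : ({3} : Set (Fin 4)) ∈ C 0 := by
      refine key 3 ?_
      rw [hExtSet]; exact Or.inl ⟨3, 3, (Set.Icc_self 3).symm⟩
    have hne : ({0} : Set (Fin 4)) ≠ {3} := by
      intro h
      have := h ▸ Set.mem_singleton (0 : Fin 4)
      rw [Set.mem_singleton_iff] at this
      exact absurd this (by decide)
    rcases hchain 0 h0m h3m hne with h | h
    · have := h (Set.mem_singleton 0)
      rw [Set.mem_singleton_iff] at this
      exact absurd this (by decide)
    · have := h (Set.mem_singleton 3)
      rw [Set.mem_singleton_iff] at this
      exact absurd this (by decide)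
  constructor
  · refine le_antisymm (Nat.sInf_le h_isd1) (le_csInf ⟨1, h_isd1⟩ fun b hb => ?_)
    rcases Nat.eq_zero_or_pos b with rfl | h
    · exact absurd hb h_isd0
    · exact h
  · refine le_antisymm (Nat.sInf_le h_osd2) (le_csInf ⟨2, h_osd2⟩ fun b hb => ?_)
    match b with
    | 0 => exact absurd hb h_osd0
    | 1 => exact absurd hb h_osd1
    | (n+2) => omega
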